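/- Let p ≥ 1, let q ≥ 1, set η = max(1/q − 1/2, 0) and f_p(x) = 1/(1 + ‖x‖_q), and let X_1, …, X_n be independent random vectors each uniformly distributed on [0,1]^p. Then for every δ > 0, P( | ( (1/n)·Σ_{i=1}^n f_p(X_i) − E[f_p(X_1)] ) / E[f_p(X_1)] | > δ ) ≤ 2·exp( −2δ²n / (p^{2η}·(2 + p)²) ). -/

import Mathlib

open MeasureTheory ProbabilityTheory

/-- The `ℓ_q`-norm `‖x‖_q = (∑ j |x j|^q)^{1/q}` on `ℝ^p` (for real `q`). -/
noncomputable def lqNorm {p : ℕ} (q : ℝ) (x : EuclideanSpace ℝ (Fin p)) : ℝ :=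
  (∑ j, |x j| ^ q) ^ (1 / q)

open Real

lemma lqNorm_nonneg {p : ℕ} (q : ℝ) (x : EuclideanSpace ℝ (Fin p)) : 0 ≤ lqNorm q x := by
  apply Real.rpow_nonneg
  exact Finset.sum_nonneg fun j _ => Real.rpow_nonneg (abs_nonneg _) _

lemma lqNorm_continuous {p : ℕ} {q : ℝ} (hq : 1 ≤ q) : Continuous (lqNorm (p := p) q) := by
  have hq0 : 0 < q := lt_of_lt_of_le one_pos hq
  have h1 : Continuous fun x : EuclideanSpace ℝ (Fin p) => ∑ j, |x j| ^ q := by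
    apply continuous_finset_sum
    intro j _
    have hev : Continuous fun x : EuclideanSpace ℝ (Fin p) => |x j| :=
      (continuous_apply j).comp (PiLp.continuous_ofLp (p := 2) (β := fun _ : Fin p => ℝ)) |>.abs
    have : Continuous fun t : ℝ => t ^ q := by
      rw [continuous_iff_continuousAt]
      exact fun t => Real.continuousAt_rpow_const t q (Or.inr hq0.le)
    exact this.comp hev
  have h2 : Continuous fun t : ℝ => t ^ (1/q) := by
    rw [continuous_iff_continuousAt]
    exact fun t => Real.continuousAt_rpow_const t _ (Or.inr (by positivity))
  exact h2.comp h1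

lemma sum_rpow_le_rpow_sum {J : Type*} (s : Finset J) (f : J → ℝ) (hf : ∀ j, 0 ≤ f j)
    {q : ℝ} (hq : 1 ≤ q) : ∑ j ∈ s, f j ^ q ≤ (∑ j ∈ s, f j) ^ q := by
  classical
  induction s using Finset.induction_on with
  | empty => simp [Real.zero_rpow (by positivity : q ≠ 0)]
  | insert _ _ hj ih =>
    rename_i a s'
    rw [Finset.sum_insert hj, Finset.sum_insert hj]
    calc f a ^ q + ∑ j ∈ s', f j ^ q ≤ f a ^ q + (∑ j ∈ s', f j) ^ q := by linarith
    _ ≤ (f a + ∑ j ∈ s', f j) ^ q := by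
      have hb : (0:ℝ) ≤ ∑ j ∈ s', f j := Finset.sum_nonneg fun j _ => hf j
      have h := NNReal.rpow_add_rpow_le_add ((f a).toNNReal) ((∑ j ∈ s', f j).toNNReal) hq
      have h2 := NNReal.rpow_le_rpow h (le_of_lt (by positivity : (0:ℝ) < q))
      rw [one_div, NNReal.rpow_inv_rpow (by positivity : q ≠ 0)] at h2
      have := NNReal.coe_le_coe.mpr h2
      rwa [NNReal.coe_rpow, NNReal.coe_add, NNReal.coe_rpow, NNReal.coe_rpow, NNReal.coe_add,
        Real.coe_toNNReal _ (hf a), Real.coe_toNNReal _ hb] at this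

lemma lqNorm_le_sum_abs {p : ℕ} {q : ℝ} (hq : 1 ≤ q) (x : EuclideanSpace ℝ (Fin p)) :
    lqNorm q x ≤ ∑ j, |x j| := by
  have hq0 : 0 < q := lt_of_lt_of_le one_pos hq
  have h := sum_rpow_le_rpow_sum Finset.univ (fun j => |x j|) (fun j => abs_nonneg _) hq
  have hs : 0 ≤ ∑ j, |x j| := Finset.sum_nonneg fun j _ => abs_nonneg _
  calc lqNorm q x ≤ ((∑ j, |x j|) ^ q) ^ (1/q) := by
        apply Real.rpow_le_rpow (Finset.sum_nonneg fun j _ => Real.rpow_nonneg (abs_nonneg _) _) h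
        positivity
  _ = ∑ j, |x j| := by
        rw [one_div, Real.rpow_rpow_inv hs (by positivity)]

instance uIcc01prob : IsProbabilityMeasure ((volume : Measure ℝ).restrict (Set.Icc (0:ℝ) 1)) := by
  constructor
  rw [Measure.restrict_apply MeasurableSet.univ, Set.univ_inter, Real.volume_Icc]
  norm_num

lemma restrict_pi_cube (p : ℕ) :
    (volume : Measure (Fin p → ℝ)).restrict (Set.pi Set.univ (fun _ => Set.Icc (0:ℝ) 1))
      = Measure.pi (fun _ : Fin p => (volume : Measure ℝ).restrict (Set.Icc (0:ℝ) 1)) := by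
  refine (Measure.pi_eq (fun t ht => ?_)).symm
  rw [Measure.restrict_apply (MeasurableSet.univ_pi fun i => ht i),
    ← Set.pi_inter_distrib, volume_pi_pi]
  congr 1
  ext i
  rw [Measure.restrict_apply (ht i)]

lemma map_eval_pi {ι : Type*} [Fintype ι] (m : ι → Measure ℝ) [∀ i, IsProbabilityMeasure (m i)]
    (j : ι) : Measure.map (Function.eval j) (Measure.pi m) = m j := by
  classical
  refine Measure.ext fun A hA => ?_
  rw [Measure.map_apply (measurable_pi_apply j) hA, Set.eval_preimage, Measure.pi_pi]
  refine Finset.prod_eq_single j (fun i _ hij => ?_) (fun h => absurd (Finset.mem_univ j) h) |>.trans ?_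
  · rw [Function.update_of_ne hij]; exact measure_univ
  · rw [Function.update_self]

lemma integral_abs_eval_cubePi {p : ℕ} (j : Fin p) :
    ∫ y : Fin p → ℝ, |y j|
      ∂((volume : Measure (Fin p → ℝ)).restrict (Set.pi Set.univ (fun _ => Set.Icc (0:ℝ) 1)))
      = 1/2 := by
  rw [restrict_pi_cube]
  have h0 : ∫ t : ℝ, |t|
        ∂(Measure.map (Function.eval j)
          (Measure.pi (fun _ : Fin p => (volume : Measure ℝ).restrict (Set.Icc (0:ℝ) 1))))
      = ∫ y : Fin p → ℝ, |Function.eval j y|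
        ∂(Measure.pi (fun _ : Fin p => (volume : Measure ℝ).restrict (Set.Icc (0:ℝ) 1))) :=
    integral_map (measurable_pi_apply j).aemeasurable
      continuous_abs.measurable.aestronglyMeasurable
  rw [map_eval_pi] at h0
  rw [show (fun y : Fin p → ℝ => |y j|) = fun y : Fin p → ℝ => |Function.eval j y| from rfl, ← h0]
  have h2 : ∫ t : ℝ, |t| ∂((volume : Measure ℝ).restrict (Set.Icc (0:ℝ) 1))
      = ∫ t in Set.Icc (0:ℝ) 1, t :=
    setIntegral_congr_fun measurableSet_Icc (fun t ht => abs_of_nonneg ht.1)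
  rw [h2, MeasureTheory.integral_Icc_eq_integral_Ioc,
    ← intervalIntegral.integral_of_le (zero_le_one (α := ℝ)), integral_id]
  norm_num

lemma exp_mul_le_cosh_add_mul_sinh {s z : ℝ} (hz : |z| ≤ 1) :
    exp (s * z) ≤ cosh s + z * sinh s := by
  have hz1 : -1 ≤ z := neg_le_of_abs_le hz
  have hz2 : z ≤ 1 := le_of_abs_le hz
  have ha : (0:ℝ) ≤ (1 + z)/2 := by linarith
  have hb : (0:ℝ) ≤ (1 - z)/2 := by linarith
  have hab : (1 + z)/2 + (1 - z)/2 = 1 := by ring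
  have h := convexOn_exp.2 (Set.mem_univ s) (Set.mem_univ (-s)) ha hb hab
  simp only [smul_eq_mul] at h
  have heq : (1 + z)/2 * s + (1 - z)/2 * (-s) = s * z := by ring
  rw [heq] at h
  rw [Real.cosh_eq, Real.sinh_eq]
  nlinarith [h]

lemma mgf_le_exp_half_sq {Ω : Type*} [MeasurableSpace Ω] {μ : Measure Ω}
    [IsProbabilityMeasure μ] {Z : Ω → ℝ} (hZm : Measurable Z) (hb : ∀ ω, |Z ω| ≤ 1)
    (hmean : ∫ ω, Z ω ∂μ = 0) (s : ℝ) : mgf Z μ s ≤ exp (s^2/2) := by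
  have hint1 : Integrable (fun ω => exp (s * Z ω)) μ := by
    refine Integrable.mono' (integrable_const (exp |s|))
      ((hZm.const_mul s).exp.aestronglyMeasurable) (ae_of_all _ fun ω => ?_)
    rw [Real.norm_eq_abs, abs_of_pos (exp_pos _), exp_le_exp]
    calc s * Z ω ≤ |s * Z ω| := le_abs_self _
    _ = |s| * |Z ω| := abs_mul _ _
    _ ≤ |s| * 1 := mul_le_mul_of_nonneg_left (hb ω) (abs_nonneg s)
    _ = |s| := mul_one _
  have hintZ : Integrable Z μ := by
    refine Integrable.mono' (integrable_const 1) hZm.aestronglyMeasurable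
      (ae_of_all _ fun ω => by rw [Real.norm_eq_abs]; exact hb ω)
  have hint2 : Integrable (fun ω => cosh s + Z ω * sinh s) μ :=
    (integrable_const (cosh s)).add (hintZ.mul_const _)
  have hle : mgf Z μ s ≤ ∫ ω, (cosh s + Z ω * sinh s) ∂μ := by
    refine integral_mono hint1 hint2 fun ω => exp_mul_le_cosh_add_mul_sinh (hb ω)
  calc mgf Z μ s ≤ ∫ ω, (cosh s + Z ω * sinh s) ∂μ := hle
  _ = cosh s + (∫ ω, Z ω ∂μ) * sinh s := by
      rw [integral_add (integrable_const _) (hintZ.mul_const _), integral_const,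
        integral_mul_const]
      simp
  _ = cosh s := by rw [hmean]; ring
  _ ≤ exp (s^2/2) := Real.cosh_le_exp_half_sq s

lemma two_sided_chernoff {Ω : Type*} [MeasureSpace Ω] [IsProbabilityMeasure (ℙ : Measure Ω)]
    {n : ℕ} (Z : Fin n → Ω → ℝ) (hZmeas : ∀ i, Measurable (Z i))
    (hindep : iIndepFun Z ℙ)
    (hb : ∀ i ω, |Z i ω| ≤ 1) (hmean : ∀ i, ∫ ω, Z i ω ∂ℙ = 0) {t : ℝ} (ht : 0 < t) :
    (ℙ {ω | (n:ℝ)*t ≤ ∑ i, Z i ω}).toReal + (ℙ {ω | ∑ i, Z i ω ≤ -((n:ℝ)*t)}).toReal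
      ≤ 2 * exp (-(n:ℝ)*t^2/2) := by
  set T : Ω → ℝ := ∑ i, Z i with hT
  have hTapp : ∀ ω, T ω = ∑ i, Z i ω := fun ω => by simp [hT, Finset.sum_apply]
  have hTmeas : Measurable T := by
    have : T = fun ω => ∑ i, Z i ω := funext hTapp
    rw [this]; exact Finset.measurable_sum _ fun i _ => hZmeas i
  have hTbound : ∀ ω, |T ω| ≤ n := fun ω => by
    rw [hTapp]
    calc |∑ i, Z i ω| ≤ ∑ i, |Z i ω| := Finset.abs_sum_le_sum_abs _ _
    _ ≤ ∑ _i : Fin n, (1:ℝ) := Finset.sum_le_sum fun i _ => hb i ω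
    _ = n := by simp
  have hint : ∀ s : ℝ, Integrable (fun ω => exp (s * T ω)) ℙ := by
    intro s
    refine Integrable.mono' (integrable_const (exp (|s| * n)))
      ((hTmeas.const_mul s).exp.aestronglyMeasurable) (ae_of_all _ fun ω => ?_)
    rw [Real.norm_eq_abs, abs_of_pos (exp_pos _), exp_le_exp]
    calc s * T ω ≤ |s * T ω| := le_abs_self _
    _ = |s| * |T ω| := abs_mul _ _
    _ ≤ |s| * n := mul_le_mul_of_nonneg_left (hTbound ω) (abs_nonneg s)
  have hmgf : ∀ s : ℝ, mgf T ℙ s ≤ exp ((n:ℝ) * s^2/2) := by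
    intro s
    rw [hT, hindep.mgf_sum hZmeas]
    calc ∏ i, mgf (Z i) ℙ s ≤ ∏ _i : Fin n, exp (s^2/2) :=
          Finset.prod_le_prod (fun i _ => mgf_nonneg)
            (fun i _ => mgf_le_exp_half_sq (hZmeas i) (hb i) (hmean i) s)
    _ = exp ((n:ℝ) * s^2/2) := by
          rw [Finset.prod_const, ← Real.exp_nat_mul]
          norm_num [mul_div_assoc]
  have hup : (ℙ {ω | (n:ℝ)*t ≤ T ω}).toReal ≤ exp (-(n:ℝ)*t^2/2) := by
    calc (ℙ {ω | (n:ℝ)*t ≤ T ω}).toReal ≤ exp (-t * ((n:ℝ)*t)) * mgf T ℙ t :=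
          measure_ge_le_exp_mul_mgf ((n:ℝ)*t) ht.le (hint t)
    _ ≤ exp (-t * ((n:ℝ)*t)) * exp ((n:ℝ)*t^2/2) :=
          mul_le_mul_of_nonneg_left (hmgf t) (exp_pos _).le
    _ = exp (-(n:ℝ)*t^2/2) := by rw [← Real.exp_add]; ring_nf
  have hlow : (ℙ {ω | T ω ≤ -((n:ℝ)*t)}).toReal ≤ exp (-(n:ℝ)*t^2/2) := by
    calc (ℙ {ω | T ω ≤ -((n:ℝ)*t)}).toReal ≤ exp (-(-t) * (-((n:ℝ)*t))) * mgf T ℙ (-t) :=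
          measure_le_le_exp_mul_mgf (-((n:ℝ)*t)) (neg_nonpos.mpr ht.le) (hint (-t))
    _ ≤ exp (-(-t) * (-((n:ℝ)*t))) * exp ((n:ℝ)*(-t)^2/2) :=
          mul_le_mul_of_nonneg_left (hmgf (-t)) (exp_pos _).le
    _ = exp (-(n:ℝ)*t^2/2) := by rw [← Real.exp_add]; ring_nf
  have e1 : {ω | (n:ℝ)*t ≤ ∑ i, Z i ω} = {ω | (n:ℝ)*t ≤ T ω} := by
    ext ω; simp [hTapp]
  have e2 : {ω | ∑ i, Z i ω ≤ -((n:ℝ)*t)} = {ω | T ω ≤ -((n:ℝ)*t)} := by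
    ext ω; simp [hTapp]
  rw [e1, e2]
  linarith

lemma tangent_ineq {t t0 : ℝ} (ht : 0 ≤ t) (ht0 : 0 ≤ t0) :
    1/(1+t0) + t0/(1+t0)^2 - 1/(1+t0)^2 * t ≤ 1/(1+t) := by
  have h1 : (0:ℝ) < 1 + t := by linarith
  have h2 : (0:ℝ) < 1 + t0 := by linarith
  have key : 1/(1+t) - (1/(1+t0) + t0/(1+t0)^2 - 1/(1+t0)^2 * t)
      = (t - t0)^2 / ((1+t) * (1+t0)^2) := by
    field_simp
    ring
  nlinarith [div_nonneg (sq_nonneg (t - t0)) (by positivity : (0:ℝ) ≤ (1+t) * (1+t0)^2), key]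

set_option maxHeartbeats 1600000 in
/-- Relative-error concentration for the Monte Carlo estimate of
`E[1/(1 + ‖X‖_q)]` from iid uniform samples on the unit cube `[0,1]^p`, where
`η = max(1/q - 1/2, 0)`. -/
theorem monte_carlo_inv_one_add_lq_norm_relative_error
    {p n : ℕ} (hp : 1 ≤ p) (hn : 0 < n) {Ω : Type*} [MeasureSpace Ω]
    [IsProbabilityMeasure (ℙ : Measure Ω)]
    (q : ℝ) (hq : 1 ≤ q)
    (S : Set (EuclideanSpace ℝ (Fin p)))
    (hS : S = {x : EuclideanSpace ℝ (Fin p) | ∀ j, x j ∈ Set.Icc (0 : ℝ) 1})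
    (X : Fin n → Ω → EuclideanSpace ℝ (Fin p))
    (hmeas : ∀ i, Measurable (X i))
    (hindep : iIndepFun X ℙ)
    (hunif : ∀ i, Measure.map (X i) ℙ = (volume S)⁻¹ • volume.restrict S)
    (δ : ℝ) (hδ : 0 < δ) :
    (ℙ {ω | δ <
        |((∑ i, 1 / (1 + lqNorm q (X i ω))) / n
            - ∫ x, 1 / (1 + lqNorm q x) ∂((volume S)⁻¹ • volume.restrict S))
          / ∫ x, 1 / (1 + lqNorm q x) ∂((volume S)⁻¹ • volume.restrict S)|}).toReal
      ≤ 2 * Real.exp (-2 * δ ^ 2 * n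
          / ((p : ℝ) ^ (2 * max (1 / q - 1 / 2) 0) * (2 + (p : ℝ)) ^ 2)) := by
  classical
  -- notation
  set f : EuclideanSpace ℝ (Fin p) → ℝ := fun x => 1 / (1 + lqNorm q x) with hf
  have hden : ∀ x : EuclideanSpace ℝ (Fin p), (0:ℝ) < 1 + lqNorm q x := fun x => by
    have := lqNorm_nonneg q x; linarith
  have hfpos : ∀ x : EuclideanSpace ℝ (Fin p), 0 < f x := fun x => by
    simp only [hf]; exact one_div_pos.mpr (hden x)
  have hfle1 : ∀ x : EuclideanSpace ℝ (Fin p), f x ≤ 1 := fun x => by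
    simp only [hf]
    rw [div_le_one (hden x)]
    have := lqNorm_nonneg q x; linarith
  have hfc : Continuous f := by
    simp only [hf]
    exact continuous_const.div (continuous_const.add (lqNorm_continuous hq))
      (fun x => (hden x).ne')
  -- the cube and its volume
  set φ := (MeasurableEquiv.toLp 2 (Fin p → ℝ)).symm with hφdef
  have hφ := EuclideanSpace.volume_preserving_symm_measurableEquiv_toLp (Fin p)
  set T : Set (Fin p → ℝ) := Set.pi Set.univ (fun _ => Set.Icc (0:ℝ) 1) with hTdef
  have hTmeas : MeasurableSet T := MeasurableSet.univ_pi fun _ => measurableSet_Icc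
  have hpre : φ ⁻¹' T = S := by
    rw [hS]
    ext x
    simp only [Set.mem_preimage, Set.mem_pi, Set.mem_univ, forall_true_left, Set.mem_setOf_eq,
      hTdef]
    rfl
  have hSmeas : MeasurableSet S := by
    rw [← hpre]; exact φ.measurable hTmeas
  have hvolS : volume S = 1 := by
    rw [← hpre, hφ.measure_preimage hTmeas.nullMeasurableSet, hTdef, volume_pi_pi]
    simp [Real.volume_Icc]
  have hν : (volume S)⁻¹ • volume.restrict S = volume.restrict S := by
    rw [hvolS]; simp
  set ν : Measure (EuclideanSpace ℝ (Fin p)) := volume.restrict S with hνdef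
  have hνprob : IsProbabilityMeasure ν := by
    constructor
    rw [hνdef, Measure.restrict_apply_univ, hvolS]
  rw [hν]
  -- the mean
  set μ0 : ℝ := ∫ x, f x ∂ν with hμ0def
  clear_value μ0
  have hmemS : ∀ᵐ x ∂ν, x ∈ S := ae_restrict_mem hSmeas
  have hf_int : Integrable f ν := by
    refine Integrable.mono' (integrable_const 1) hfc.measurable.aestronglyMeasurable
      (ae_of_all _ fun x => ?_)
    rw [Real.norm_eq_abs, abs_of_pos (hfpos x)]; exact hfle1 x
  -- integral of lqNorm is at most p/2
  have hsum_int : Integrable (fun x : EuclideanSpace ℝ (Fin p) => ∑ j, |x j|) ν := by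
    refine Integrable.mono' (integrable_const (p:ℝ)) ?_ (hmemS.mono fun x hx => ?_)
    · refine (continuous_finset_sum _ fun j _ => ?_).aestronglyMeasurable
      exact ((continuous_apply j).comp (PiLp.continuous_ofLp (p := 2) (β := fun _ : Fin p => ℝ))).abs
    · rw [hS] at hx
      rw [Real.norm_eq_abs, abs_of_nonneg (Finset.sum_nonneg fun j _ => abs_nonneg _)]
      calc ∑ j, |x j| ≤ ∑ _j : Fin p, (1:ℝ) := by
            refine Finset.sum_le_sum fun j _ => ?_
            rw [abs_of_nonneg (hx j).1]; exact (hx j).2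
      _ = p := by simp
  have hlq_int : Integrable (fun x : EuclideanSpace ℝ (Fin p) => lqNorm q x) ν := by
    refine Integrable.mono' hsum_int (lqNorm_continuous hq).aestronglyMeasurable
      (ae_of_all _ fun x => ?_)
    rw [Real.norm_eq_abs, abs_of_nonneg (lqNorm_nonneg q x)]
    exact lqNorm_le_sum_abs hq x
  have habs_int : ∀ j : Fin p, Integrable (fun x : EuclideanSpace ℝ (Fin p) => |x j|) ν := by
    intro j
    refine Integrable.mono' (integrable_const 1) ?_ (hmemS.mono fun x hx => ?_)
    · exact (((continuous_apply j).comp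
        (PiLp.continuous_ofLp (p := 2) (β := fun _ : Fin p => ℝ))).abs).aestronglyMeasurable
    · rw [hS] at hx
      rw [Real.norm_eq_abs, abs_abs, abs_of_nonneg (hx j).1]; exact (hx j).2
  have hint_abs : ∀ j : Fin p, ∫ x, |x j| ∂ν = 1/2 := by
    intro j
    have hmap : ν = Measure.map φ.symm (volume.restrict T) := by
      have h1 : (volume : Measure (EuclideanSpace ℝ (Fin p))) = Measure.map (φ.symm) volume :=
        (MeasurePreserving.symm _ hφ).map_eq.symm
      have h2 : (φ.symm : (Fin p → ℝ) → EuclideanSpace ℝ (Fin p)) ⁻¹' S = T := by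
        rw [← hpre]
        ext y
        simp [Set.mem_preimage]
      rw [hνdef, h1, Measure.restrict_map φ.symm.measurable hSmeas, h2]
    rw [hmap, integral_map φ.symm.measurable.aemeasurable]
    · exact integral_abs_eval_cubePi j
    · exact (((continuous_apply j).comp
        (PiLp.continuous_ofLp (p := 2) (β := fun _ : Fin p => ℝ))).abs).measurable.aestronglyMeasurable
  have hlq_mean : ∫ x, lqNorm q x ∂ν ≤ (p:ℝ)/2 := by
    calc ∫ x, lqNorm q x ∂ν ≤ ∫ x, (∑ j, |x j|) ∂ν :=
          integral_mono hlq_int hsum_int fun x => lqNorm_le_sum_abs hq x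
    _ = ∑ j, ∫ x, |x j| ∂ν := integral_finset_sum _ fun j _ => habs_int j
    _ = (p:ℝ)/2 := by
          rw [Finset.sum_congr rfl fun j _ => hint_abs j]
          simp [Finset.sum_const]
          ring
  -- lower bound for the mean via the tangent line at p/2
  have hp2 : (0:ℝ) < 2 + p := by positivity
  have hμ0_ge : 2/(2+(p:ℝ)) ≤ μ0 := by
    have ht0nn : (0:ℝ) ≤ (p:ℝ)/2 := by positivity
    set t0 : ℝ := (p:ℝ)/2 with ht0
    set a : ℝ := 1/(1+t0) + t0/(1+t0)^2 with ha
    set b : ℝ := 1/(1+t0)^2 with hb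
    clear_value t0 a b
    have ht0pos : (0:ℝ) < 1 + t0 := by linarith
    have hbpos : 0 < b := by rw [hb]; exact one_div_pos.mpr (pow_pos ht0pos 2)
    have htangent : ∀ x : EuclideanSpace ℝ (Fin p), a - b * lqNorm q x ≤ f x := by
      intro x
      rw [ha, hb, hf]
      have := tangent_ineq (lqNorm_nonneg q x) ht0nn
      simp only
      linarith
    have hg_int : Integrable (fun x : EuclideanSpace ℝ (Fin p) => a - b * lqNorm q x) ν :=
      (integrable_const a).sub (hlq_int.const_mul b)
    have hmono := mul_le_mul_of_nonneg_left hlq_mean hbpos.le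
    have h1 : a - b * t0 ≤ μ0 := by
      calc a - b * t0 ≤ a - b * ∫ x, lqNorm q x ∂ν := by linarith
      _ = ∫ x, (a - b * lqNorm q x) ∂ν := by
            rw [integral_sub (integrable_const a) (hlq_int.const_mul b), integral_const,
              integral_const_mul]
            simp
      _ ≤ μ0 := by rw [hμ0def]; exact integral_mono hg_int hf_int htangent
    have h2 : a - b * t0 = 2/(2+(p:ℝ)) := by
      rw [ha, hb, ht0]
      have d1 : (0:ℝ) < 1 + (p:ℝ)/2 := by positivity
      have d2 : (0:ℝ) < 2 + (p:ℝ) := by positivity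
      field_simp
      ring
    linarith
  have hμ0pos : 0 < μ0 := lt_of_lt_of_le (by positivity) hμ0_ge
  have hμ0le1 : μ0 ≤ 1 := by
    have : μ0 ≤ ∫ _x, (1:ℝ) ∂ν := by
      rw [hμ0def]; exact integral_mono hf_int (integrable_const 1) hfle1
    simpa using this
  -- the centered variables
  set Z : Fin n → Ω → ℝ := fun i ω => f (X i ω) - μ0 with hZ
  clear_value Z
  have hZmeas : ∀ i, Measurable (Z i) := fun i => by
    rw [hZ]; exact ((hfc.measurable.comp (hmeas i)).sub measurable_const)
  have hZindep : iIndepFun Z ℙ := by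
    rw [hZ]
    exact hindep.comp (fun _ x => f x - μ0) (fun _ => hfc.measurable.sub measurable_const)
  have hZbound : ∀ i ω, |Z i ω| ≤ 1 := by
    intro i ω
    rw [hZ, abs_le]
    constructor
    · have := hfpos (X i ω); simp only; linarith
    · have := hfle1 (X i ω); simp only; linarith
  have hZmean : ∀ i, ∫ ω, Z i ω ∂ℙ = 0 := by
    intro i
    have hfXint : Integrable (fun ω => f (X i ω)) ℙ := by
      refine Integrable.mono' (integrable_const 1)
        (hfc.measurable.comp (hmeas i)).aestronglyMeasurable (ae_of_all _ fun ω => ?_)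
      rw [Real.norm_eq_abs, abs_of_pos (hfpos _)]; exact hfle1 _
    have hmapint : ∫ ω, f (X i ω) ∂ℙ = μ0 := by
      have := integral_map (hmeas i).aemeasurable
        (hfc.measurable.aestronglyMeasurable (μ := Measure.map (X i) ℙ)) (f := f)
      rw [hunif i, hν] at this
      rw [← this, hμ0def]
    rw [hZ]
    simp only
    rw [integral_sub hfXint (integrable_const μ0), hmapint, integral_const]
    simp
  -- apply the Chernoff bound
  set t : ℝ := δ * μ0 with ht
  clear_value t
  have htpos : 0 < t := by rw [ht]; exact mul_pos hδ hμ0pos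
  have hchern := two_sided_chernoff Z hZmeas hZindep hZbound hZmean htpos
  -- the event inclusion
  have hincl : {ω : Ω | δ <
        |((∑ i, 1 / (1 + lqNorm q (X i ω))) / n - μ0) / μ0|}
      ⊆ {ω : Ω | (n:ℝ)*t ≤ ∑ i, Z i ω} ∪ {ω : Ω | ∑ i, Z i ω ≤ -((n:ℝ)*t)} := by
    intro ω hω
    simp only [Set.mem_setOf_eq] at hω
    set Sn : ℝ := ∑ i, 1 / (1 + lqNorm q (X i ω)) with hSn
    have hZsum : ∑ i, Z i ω = Sn - n * μ0 := by
      rw [hZ, Finset.sum_sub_distrib, Finset.sum_const, Finset.card_univ, Fintype.card_fin,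
        nsmul_eq_mul, hSn, hf]
    have hnpos : (0:ℝ) < n := by exact_mod_cast hn
    have habs : |(Sn / n - μ0) / μ0| = |Sn - n * μ0| / (n * μ0) := by
      rw [abs_div, abs_of_pos hμ0pos]
      have : Sn / n - μ0 = (Sn - n * μ0) / n := by field_simp
      rw [this, abs_div, abs_of_pos hnpos, div_div]
    rw [habs] at hω
    have hδμ : (n:ℝ) * t < |Sn - n * μ0| := by
      rw [ht]
      have := (lt_div_iff₀ (by positivity : (0:ℝ) < n * μ0)).mp hω
      nlinarith
    rcases lt_abs.mp hδμ with h | h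
    · left; simp only [Set.mem_setOf_eq, hZsum]; linarith
    · right; simp only [Set.mem_setOf_eq, hZsum]; linarith
  -- put things together
  have hmain : (ℙ {ω : Ω | δ <
        |((∑ i, 1 / (1 + lqNorm q (X i ω))) / n - μ0) / μ0|}).toReal
      ≤ 2 * Real.exp (-(n:ℝ) * t^2 / 2) := by
    have h1 : (ℙ : Measure Ω) {ω : Ω | δ <
          |((∑ i, 1 / (1 + lqNorm q (X i ω))) / n - μ0) / μ0|}
        ≤ ℙ ({ω : Ω | (n:ℝ)*t ≤ ∑ i, Z i ω} ∪ {ω : Ω | ∑ i, Z i ω ≤ -((n:ℝ)*t)}) :=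
      measure_mono hincl
    have h2 : (ℙ : Measure Ω) ({ω : Ω | (n:ℝ)*t ≤ ∑ i, Z i ω} ∪ {ω : Ω | ∑ i, Z i ω ≤ -((n:ℝ)*t)})
        ≤ ℙ {ω : Ω | (n:ℝ)*t ≤ ∑ i, Z i ω} + ℙ {ω : Ω | ∑ i, Z i ω ≤ -((n:ℝ)*t)} :=
      measure_union_le _ _
    have h3 : (ℙ {ω : Ω | δ <
        |((∑ i, 1 / (1 + lqNorm q (X i ω))) / n - μ0) / μ0|}).toReal
        ≤ (ℙ {ω : Ω | (n:ℝ)*t ≤ ∑ i, Z i ω}).toReal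
          + (ℙ {ω : Ω | ∑ i, Z i ω ≤ -((n:ℝ)*t)}).toReal := by
      rw [← ENNReal.toReal_add (measure_ne_top _ _) (measure_ne_top _ _)]
      exact ENNReal.toReal_mono (by
        exact ENNReal.add_ne_top.mpr ⟨measure_ne_top _ _, measure_ne_top _ _⟩)
        (le_trans h1 h2)
    linarith
  -- final numeric comparison
  have hexp_le : 2 * Real.exp (-(n:ℝ) * t^2 / 2)
      ≤ 2 * Real.exp (-2 * δ ^ 2 * n
          / ((p : ℝ) ^ (2 * max (1 / q - 1 / 2) 0) * (2 + (p : ℝ)) ^ 2)) := by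
    have hc : (1:ℝ) ≤ (p : ℝ) ^ (2 * max (1 / q - 1 / 2) 0) := by
      apply Real.one_le_rpow (by exact_mod_cast hp)
      positivity
    have hPpos : (0:ℝ) < (p : ℝ) ^ (2 * max (1 / q - 1 / 2) 0) * (2 + (p : ℝ)) ^ 2 := by
      nlinarith
    have hfrac : 2 * δ ^ 2 * n / ((p : ℝ) ^ (2 * max (1 / q - 1 / 2) 0) * (2 + (p : ℝ)) ^ 2)
        ≤ (n:ℝ) * t^2 / 2 := by
      have step1 : 2 * δ ^ 2 * n / ((p : ℝ) ^ (2 * max (1 / q - 1 / 2) 0) * (2 + (p : ℝ)) ^ 2)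
          ≤ 2 * δ ^ 2 * n / ((2 + (p : ℝ)) ^ 2) := by
        apply div_le_div_of_nonneg_left (by positivity) (by positivity)
        nlinarith
      have hμsq : 4 / (2 + (p:ℝ))^2 ≤ μ0^2 := by
        have h4 : (2/(2+(p:ℝ)))^2 ≤ μ0^2 := by
          apply pow_le_pow_left₀ (by positivity) hμ0_ge
        calc 4 / (2 + (p:ℝ))^2 = (2/(2+(p:ℝ)))^2 := by rw [div_pow]; norm_num
        _ ≤ μ0^2 := h4
      have step2 : 2 * δ ^ 2 * n / ((2 + (p : ℝ)) ^ 2) ≤ (n:ℝ) * t^2 / 2 := by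
        rw [ht, div_le_div_iff₀ (by positivity) (by norm_num : (0:ℝ) < 2)]
        have hn0 : (0:ℝ) ≤ n := Nat.cast_nonneg n
        have := mul_le_mul_of_nonneg_left hμsq
          (by positivity : (0:ℝ) ≤ (n:ℝ) * δ^2 * (2 + (p:ℝ))^2)
        calc 2 * δ ^ 2 * (n:ℝ) * 2 = ((n:ℝ) * δ^2 * (2+(p:ℝ))^2) * (4 / (2+(p:ℝ))^2) := by
              field_simp; ring
        _ ≤ ((n:ℝ) * δ^2 * (2+(p:ℝ))^2) * μ0^2 := this
        _ = (n:ℝ) * (δ * μ0)^2 * (2+(p:ℝ))^2 := by ring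
      linarith
    have : -(n:ℝ) * t^2 / 2 ≤ -2 * δ ^ 2 * n
        / ((p : ℝ) ^ (2 * max (1 / q - 1 / 2) 0) * (2 + (p : ℝ)) ^ 2) := by
      have e1 : -2 * δ ^ 2 * (n:ℝ)
          / ((p : ℝ) ^ (2 * max (1 / q - 1 / 2) 0) * (2 + (p : ℝ)) ^ 2)
          = -(2 * δ ^ 2 * (n:ℝ)
          / ((p : ℝ) ^ (2 * max (1 / q - 1 / 2) 0) * (2 + (p : ℝ)) ^ 2)) := by ring
      have e2 : -(n:ℝ) * t^2 / 2 = -((n:ℝ) * t^2 / 2) := by ring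
      rw [e1, e2, neg_le_neg_iff]
      exact hfrac
    have := Real.exp_le_exp.mpr this
    linarith
  calc (ℙ {ω : Ω | δ <
        |((∑ i, 1 / (1 + lqNorm q (X i ω))) / n - μ0) / μ0|}).toReal
      ≤ 2 * Real.exp (-(n:ℝ) * t^2 / 2) := hmain
  _ ≤ _ := hexp_le
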